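/- Let d ≥ 1 and let K ⊂ ℝ^d be a compact set. Let Q : ℝ → ℝ be twice continuously differentiable with Q'(0) = 0. Set α(t) := t^{-1/4} and β(t) := t^{3/2}, and for each Borel probability measure μ on ℝ^d supported in K define J_t(μ) := −(t²/(2β(t))) ∬ (Q(δ_{α(t)}(z,w)) − Q(0)) dμ(z) dμ(w). Then, as t → ∞, J_t(μ) converges to J(μ) := −(Q''(0)/4) ∬ |z − w|² dμ(z) dμ(w), uniformly over all probability measures μ supported in K; i.e. for every ε > 0 there exists T > 0 such that for all t ≥ T and all Borel probability measures μ with μ(K) = 1, one has |J_t(μ) − J(μ)| ≤ ε. -/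

import Mathlib

set_option maxHeartbeats 1000000

open MeasureTheory

section Helpers
open Real Set
lemma mono_from_zero (B : ℝ) (f : ℝ → ℝ) (hf : Differentiable ℝ f)
    (hc : ∀ x ∈ Set.Ioo (0:ℝ) B, 0 ≤ deriv f x) :
    ∀ x ∈ Set.Icc (0:ℝ) B, f 0 ≤ f x := by
  intro x hx
  have hmono := monotoneOn_of_deriv_nonneg (convex_Icc 0 B) hf.continuous.continuousOn
    (fun y hy => (hf y).differentiableWithinAt)
    (by intro y hy; rw [interior_Icc] at hy; exact hc y hy)
  exact hmono ⟨le_refl 0, hx.1.trans hx.2⟩ hx (hx.1)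

lemma sinh_le_two_mul {x : ℝ} (h0 : 0 ≤ x) (h1 : x ≤ 1) : Real.sinh x ≤ 2 * x := by
  have hcosh1 : Real.cosh 1 < 2 := by
    rw [Real.cosh_eq]
    have h1 : Real.exp 1 < 2.7182818286 := Real.exp_one_lt_d9
    have h2 : Real.exp (-1) ≤ 1 := by
      rw [Real.exp_le_one_iff]; norm_num
    nlinarith
  have := mono_from_zero 1 (fun x => 2*x - Real.sinh x)
    (by fun_prop) (fun y hy => by
      have hd : HasDerivAt (fun x : ℝ => 2*x - Real.sinh x) (2 - Real.cosh y) y :=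
        ((hasDerivAt_id y).const_mul 2).congr_deriv (by ring) |>.sub (Real.hasDerivAt_sinh y)
      rw [hd.deriv]
      have : Real.cosh y ≤ Real.cosh 1 := by
        rw [Real.cosh_le_cosh, abs_of_nonneg hy.1.le, abs_one]; exact hy.2.le
      linarith) x ⟨h0, h1⟩
  simp only [mul_zero, Real.sinh_zero, sub_zero] at this; linarith

lemma cosh_le_one_add_sq' {x : ℝ} (h0 : 0 ≤ x) (h1 : x ≤ 1) : Real.cosh x ≤ 1 + x ^ 2 := by
  have := mono_from_zero 1 (fun x => 1 + x^2 - Real.cosh x)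
    (by fun_prop) (fun y hy => by
      have hd : HasDerivAt (fun x : ℝ => 1 + x^2 - Real.cosh x) (2*y - Real.sinh y) y := by
        have := ((hasDerivAt_pow 2 y).const_add 1).sub (Real.hasDerivAt_cosh y)
        exact this.congr_deriv (by push_cast; ring)
      rw [hd.deriv]
      have := sinh_le_two_mul hy.1.le hy.2.le
      linarith) x ⟨h0, h1⟩
  norm_num at this; linarith

lemma sinh_le_add_cube {x : ℝ} (h0 : 0 ≤ x) (h1 : x ≤ 1) : Real.sinh x ≤ x + x ^ 3 := by
  have := mono_from_zero 1 (fun x => x + x^3 - Real.sinh x)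
    (by fun_prop) (fun y hy => by
      have hd : HasDerivAt (fun x : ℝ => x + x^3 - Real.sinh x) (1 + 3*y^2 - Real.cosh y) y := by
        exact (((hasDerivAt_id y).add (hasDerivAt_pow 3 y)).sub (Real.hasDerivAt_sinh y)).congr_deriv (by push_cast; ring)
      rw [hd.deriv]
      have := cosh_le_one_add_sq' hy.1.le hy.2.le
      nlinarith [sq_nonneg y]) x ⟨h0, h1⟩
  norm_num at this; linarith

lemma self_le_sinh' {x : ℝ} (h0 : 0 ≤ x) : x ≤ Real.sinh x := Real.self_le_sinh_iff.2 h0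

-- |cosh u - 1 - u^2/2| ≤ u^4 for |u| ≤ 1
lemma cosh_taylor {u : ℝ} (h1 : |u| ≤ 1) : |Real.cosh u - 1 - u^2/2| ≤ u^4 := by
  have hv0 : (0:ℝ) ≤ |u|/2 := by positivity
  have hv1 : |u|/2 ≤ 1 := by linarith [abs_nonneg u]
  have hid : Real.cosh u = 1 + 2 * Real.sinh (u/2)^2 := by
    have h2 : Real.cosh (2 * (u/2)) = Real.cosh (u/2)^2 + Real.sinh (u/2)^2 :=
      Real.cosh_two_mul (u/2)
    have h3 : Real.cosh (u/2)^2 = Real.sinh (u/2)^2 + 1 := Real.cosh_sq (u/2)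
    have : (2:ℝ) * (u/2) = u := by ring
    rw [this] at h2; linarith
  have habs : Real.sinh (u/2)^2 = Real.sinh (|u|/2) ^ 2 := by
    rcases abs_cases u with ⟨h, _⟩ | ⟨h, _⟩
    · rw [h]
    · rw [h]; rw [show -u/2 = -(u/2) by ring, Real.sinh_neg]; ring
  have hlo : |u|/2 ≤ Real.sinh (|u|/2) := self_le_sinh' hv0
  have hhi : Real.sinh (|u|/2) ≤ |u|/2 + (|u|/2)^3 := sinh_le_add_cube hv0 hv1
  have hu2 : |u|^2 = u^2 := sq_abs u
  have hu4 : |u|^4 = u^4 := by rw [show (4:ℕ) = 2*2 by rfl, pow_mul, pow_mul, hu2]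
  rw [hid, habs]
  have hs0 : 0 ≤ Real.sinh (|u|/2) := hv0.trans hlo
  have hsq : Real.sinh (|u|/2)^2 ≤ (|u|/2 + (|u|/2)^3)^2 := by nlinarith
  have e2 : u^2 = 4*(|u|/2)^2 := by rw [← hu2]; ring
  have e4 : u^4 = 16*(|u|/2)^4 := by rw [← hu4]; ring
  have e6 : (|u|/2)^6 ≤ (|u|/2)^4 := by
    have := pow_le_pow_of_le_one hv0 hv1 (show 4 ≤ 6 by norm_num)
    linarith
  rw [abs_le]
  constructor
  · nlinarith [pow_nonneg hv0 4]
  · nlinarith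

lemma taylor_q (Q : ℝ → ℝ) (hQ : ContDiff ℝ 2 Q) (hQ'0 : deriv Q 0 = 0) :
    ∀ ε > 0, ∃ ρ > 0, ∀ s, 0 ≤ s → s ≤ ρ →
      |Q s - Q 0 - deriv (deriv Q) 0 / 2 * s ^ 2| ≤ ε * s ^ 2 := by
  intro ε hε
  have h2 : ContDiff ℝ (1+1) Q := by norm_num; exact hQ
  rw [contDiff_succ_iff_deriv] at h2
  obtain ⟨hQd, -, hQ1⟩ := h2
  have h1 : Differentiable ℝ (deriv Q) ∧ Continuous (deriv (deriv Q)) :=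
    contDiff_one_iff_deriv.1 hQ1
  obtain ⟨hQ'd, hQ''c⟩ := h1
  set q := deriv (deriv Q) 0 with hq
  -- continuity of second derivative at 0
  obtain ⟨ρ, hρ, hcont⟩ := Metric.continuousAt_iff.1 hQ''c.continuousAt ε hε
  refine ⟨ρ/2, by positivity, fun s hs0 hsρ => ?_⟩
  -- step 1 : |deriv Q x - q*x| ≤ ε*x on [0,s]
  have step1 : ∀ x ∈ Icc (0:ℝ) s, |deriv Q x - q * x| ≤ ε * x := by
    intro x hx
    have hder : ∀ y ∈ Icc (0:ℝ) x,
        HasDerivWithinAt (fun u => deriv Q u - q * u) (deriv (deriv Q) y - q) (Icc 0 x) y := by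
      intro y hy
      exact (((hQ'd y).hasDerivAt.sub ((hasDerivAt_id y).const_mul q)).congr_deriv
        (by ring)).hasDerivWithinAt
    have hbound : ∀ y ∈ Ico (0:ℝ) x, ‖deriv (deriv Q) y - q‖ ≤ ε := by
      intro y hy
      have : dist y 0 < ρ := by
        rw [Real.dist_eq, sub_zero, abs_of_nonneg hy.1]
        have := hy.2.trans_le (hx.2.trans hsρ); linarith
      exact (hcont this).le
    have := norm_image_sub_le_of_norm_deriv_le_segment' hder hbound x
      ⟨hx.1, le_refl x⟩
    simp only [Real.norm_eq_abs, sub_zero, mul_zero] at this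
    rw [hQ'0, sub_zero] at this
    exact this
  -- step 2 : apply MVT to g = Q - q/2 * x^2
  have hder2 : ∀ y ∈ Icc (0:ℝ) s,
      HasDerivWithinAt (fun u => Q u - q/2 * u^2) (deriv Q y - q * y) (Icc 0 s) y := by
    intro y hy
    exact (((hQd y).hasDerivAt.sub ((hasDerivAt_pow 2 y).const_mul (q/2))).congr_deriv
      (by push_cast; ring)).hasDerivWithinAt
  have hbound2 : ∀ y ∈ Ico (0:ℝ) s, ‖deriv Q y - q * y‖ ≤ ε * s := by
    intro y hy
    have := step1 y ⟨hy.1, hy.2.le⟩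
    have hys : y ≤ s := hy.2.le
    rw [Real.norm_eq_abs]
    calc |deriv Q y - q * y| ≤ ε * y := this
      _ ≤ ε * s := mul_le_mul_of_nonneg_left hys hε.le
  have := norm_image_sub_le_of_norm_deriv_le_segment' hder2 hbound2 s ⟨hs0, le_refl s⟩
  simp only [Real.norm_eq_abs] at this
  calc |Q s - Q 0 - q / 2 * s ^ 2| = |Q s - q/2*s^2 - (Q 0 - q/2*0^2)| := by ring_nf
    _ ≤ ε * s * (s - 0) := this
    _ = ε * s^2 := by ring

section helpers
variable {E : Type*} [NormedAddCommGroup E] [InnerProductSpace ℝ E]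

lemma cosc_abs_le (z w : E) : |(inner ℝ z w : ℝ) / (‖z‖ * ‖w‖)| ≤ 1 := by
  rcases eq_or_ne (‖z‖ * ‖w‖) 0 with h | h
  · rw [h, div_zero]; norm_num
  · rw [abs_div, abs_of_nonneg (by positivity : (0:ℝ) ≤ ‖z‖ * ‖w‖), div_le_one]
    · exact abs_real_inner_le_norm z w
    · rcases lt_or_eq_of_le (by positivity : (0:ℝ) ≤ ‖z‖ * ‖w‖) with h' | h'
      · exact h'
      · exact absurd h'.symm h

lemma inner_eq_mul_cosc (z w : E) :
    ‖z‖ * ‖w‖ * ((inner ℝ z w : ℝ) / (‖z‖ * ‖w‖)) = (inner ℝ z w : ℝ) := by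
  rcases eq_or_ne (‖z‖ * ‖w‖) 0 with h | h
  · rw [h, zero_mul]
    rcases mul_eq_zero.1 h with h' | h'
    · rw [norm_eq_zero.1 h', inner_zero_left]
    · rw [norm_eq_zero.1 h', inner_zero_right]
  · rw [mul_div_assoc']; exact mul_div_cancel_left₀ _ h

end helpers

lemma key_pointwise {E : Type*} [NormedAddCommGroup E] [InnerProductSpace ℝ E]
    (K : Set E) (Q : ℝ → ℝ) (hQ : ContDiff ℝ 2 Q) (hQ'0 : deriv Q 0 = 0)
    (δ : ℝ → E → E → ℝ)
    (hδ_nonneg : ∀ α z w, 0 ≤ δ α z w)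
    (hδ_cosh : ∀ α z w, Real.cosh (δ α z w) = Real.cosh (α * ‖z‖) * Real.cosh (α * ‖w‖) -
        Real.sinh (α * ‖z‖) * Real.sinh (α * ‖w‖) * ((inner ℝ z w : ℝ) / (‖z‖ * ‖w‖)))
    (R : ℝ) (hR : 1 ≤ R) (hKR : ∀ z ∈ K, ‖z‖ ≤ R) :
    ∀ ε > 0, ∃ α₀ > 0, α₀ ≤ 1 / (4 * R ^ 2) ∧
      ∀ α, 0 < α → α ≤ α₀ → ∀ z ∈ K, ∀ w ∈ K,
        |1 / (2 * α ^ 2) * (Q (δ α z w) - Q 0) -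
          deriv (deriv Q) 0 / 4 * ‖z - w‖ ^ 2| ≤ ε := by
  intro ε hε
  set q := deriv (deriv Q) 0 with hq
  have hR0 : (0:ℝ) < R := lt_of_lt_of_le one_pos hR
  have hR2 : (0:ℝ) < R ^ 2 := by positivity
  obtain ⟨ρ, hρ, hTay⟩ := taylor_q Q hQ hQ'0 (ε / (256 * R ^ 4)) (by positivity)
  set C := |q| * (3120 * R ^ 8) + 1 with hC
  have hCpos : 0 < C := by positivity
  refine ⟨min (min (1 / (4 * R ^ 2)) (ρ / (8 * R ^ 2))) (Real.sqrt (ε / C)), ?_,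
    (min_le_left _ _).trans (min_le_left _ _), ?_⟩
  · have h1 : (0:ℝ) < Real.sqrt (ε / C) := Real.sqrt_pos.2 (by positivity)
    positivity
  intro α hα hαle z hz w hw
  have hα1 : α ≤ 1 / (4 * R ^ 2) := hαle.trans ((min_le_left _ _).trans (min_le_left _ _))
  have hαρ : α ≤ ρ / (8 * R ^ 2) := hαle.trans ((min_le_left _ _).trans (min_le_right _ _))
  have hαε : α ^ 2 ≤ ε / C := by
    have h := hαle.trans (min_le_right _ _)
    have h2 : α ^ 2 ≤ Real.sqrt (ε / C) ^ 2 := pow_le_pow_left₀ hα.le h 2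
    rwa [Real.sq_sqrt (by positivity : (0:ℝ) ≤ ε / C)] at h2
  have hR2one : (1:ℝ) ≤ R ^ 2 := by
    calc (1:ℝ) = 1 * 1 := by ring
      _ ≤ R * R := mul_le_mul hR hR zero_le_one (by linarith)
      _ = R ^ 2 := by ring
  have hαone : α ≤ 1 := by
    have : 1 / (4 * R ^ 2) ≤ 1 := by
      rw [div_le_one (by positivity)]; linarith
    linarith
  set a := α * ‖z‖ with ha_def
  set b := α * ‖w‖ with hb_def
  set c := (inner ℝ z w : ℝ) / (‖z‖ * ‖w‖) with hc_def
  set s := δ α z w with hs_def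
  set r := ‖z - w‖ with hr_def
  have hz' := hKR z hz
  have hw' := hKR w hw
  have hznn : (0:ℝ) ≤ ‖z‖ := norm_nonneg z
  have hwnn : (0:ℝ) ≤ ‖w‖ := norm_nonneg w
  have ha0 : 0 ≤ a := by positivity
  have hb0 : 0 ≤ b := by positivity
  have haR : a ≤ α * R := by
    rw [ha_def]; exact mul_le_mul_of_nonneg_left hz' hα.le
  have hbR : b ≤ α * R := by
    rw [hb_def]; exact mul_le_mul_of_nonneg_left hw' hα.le
  have hαR1 : α * R ≤ 1 := by
    have hRR : R ≤ R ^ 2 := by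
      calc R = R * 1 := by ring
        _ ≤ R * R := mul_le_mul_of_nonneg_left hR hR0.le
        _ = R ^ 2 := by ring
    calc α * R ≤ (1 / (4 * R ^ 2)) * R := mul_le_mul_of_nonneg_right hα1 hR0.le
      _ ≤ 1 := by rw [div_mul_eq_mul_div, div_le_one (by positivity)]; linarith
  have ha1 : a ≤ 1 := haR.trans hαR1
  have hb1 : b ≤ 1 := hbR.trans hαR1
  have hcabs : |c| ≤ 1 := cosc_abs_le z w
  have hcle : c ≤ 1 := (abs_le.1 hcabs).2
  have hcge : -1 ≤ c := (abs_le.1 hcabs).1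
  have hP : ‖z‖ * ‖w‖ * c = (inner ℝ z w : ℝ) := inner_eq_mul_cosc z w
  have hr0 : 0 ≤ r := norm_nonneg _
  have hrR : r ≤ 2 * R := by
    rw [hr_def]
    calc ‖z - w‖ ≤ ‖z‖ + ‖w‖ := norm_sub_le z w
      _ ≤ 2 * R := by linarith
  have habc : a * b * (1 - c) = a * b - α ^ 2 * (inner ℝ z w : ℝ) := by
    rw [← hP, ha_def, hb_def]; ring
  have hr2 : α ^ 2 * r ^ 2 = (a - b) ^ 2 + 2 * (a * b * (1 - c)) := by
    rw [habc, hr_def, ha_def, hb_def, norm_sub_sq_real]; ring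
  have hE2 : 0 ≤ a * b * (1 - c) := mul_nonneg (mul_nonneg ha0 hb0) (by linarith)
  have hab2 : (a - b) ^ 2 ≤ α ^ 2 * r ^ 2 := by rw [hr2]; linarith
  have hcs : Real.cosh s = Real.cosh (a - b) + Real.sinh a * Real.sinh b * (1 - c) := by
    rw [hs_def, hδ_cosh α z w, Real.cosh_sub, ← ha_def, ← hb_def, ← hc_def]; ring
  have hsa1 : Real.sinh a ≤ a + a ^ 3 := sinh_le_add_cube ha0 ha1
  have hsb1 : Real.sinh b ≤ b + b ^ 3 := sinh_le_add_cube hb0 hb1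
  have hsa0 : a ≤ Real.sinh a := self_le_sinh' ha0
  have hsb0 : b ≤ Real.sinh b := self_le_sinh' hb0
  have hprodl : a * b ≤ Real.sinh a * Real.sinh b :=
    mul_le_mul hsa0 hsb0 hb0 (ha0.trans hsa0)
  have hprod : Real.sinh a * Real.sinh b - a * b ≤ 2 * (a * b) * (a ^ 2 + b ^ 2) := by
    have key : Real.sinh a * Real.sinh b ≤ (a + a ^ 3) * (b + b ^ 3) :=
      mul_le_mul hsa1 hsb1 (le_trans hb0 hsb0) (by positivity)
    have h1 : a ^ 2 * b ^ 2 ≤ a ^ 2 + b ^ 2 := by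
      have hb2 : b ^ 2 ≤ 1 := by
        calc b ^ 2 = b * b := sq b
          _ ≤ 1 * 1 := mul_le_mul hb1 hb1 hb0 zero_le_one
          _ = 1 := by ring
      have := mul_le_mul_of_nonneg_left hb2 (sq_nonneg a)
      have hbsq := sq_nonneg b
      linarith [mul_one (a ^ 2)]
    have h2 : a * b * (a ^ 2 * b ^ 2) ≤ a * b * (a ^ 2 + b ^ 2) :=
      mul_le_mul_of_nonneg_left h1 (mul_nonneg ha0 hb0)
    linarith [key, h2]
  have hcosh_ab : |Real.cosh (a - b) - 1 - (a - b) ^ 2 / 2| ≤ (a - b) ^ 4 :=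
    cosh_taylor (abs_le.2 ⟨by linarith, by linarith⟩)
  have hrsq : r ^ 2 ≤ 4 * R ^ 2 := by
    calc r ^ 2 ≤ (2 * R) ^ 2 := pow_le_pow_left₀ hr0 hrR 2
      _ = 4 * R ^ 2 := by ring
  have e0 : α ^ 2 * r ^ 2 ≤ 4 * (R ^ 2 * α ^ 2) := by
    have := mul_le_mul_of_nonneg_left hrsq (sq_nonneg α)
    linarith
  have hab_sq : (a - b) ^ 2 ≤ 4 * (R ^ 2 * α ^ 2) := hab2.trans e0
  have hsq1 : (α * R) ^ 2 ≤ 1 := by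
    calc (α * R) ^ 2 ≤ 1 ^ 2 := pow_le_pow_left₀ (by positivity) hαR1 2
      _ = 1 := one_pow 2
  have m1 : R ^ 4 * α ^ 4 ≤ R ^ 2 * α ^ 2 := by
    calc R ^ 4 * α ^ 4 = (α * R) ^ 2 * (α * R) ^ 2 := by ring
      _ ≤ (α * R) ^ 2 * 1 := mul_le_mul_of_nonneg_left hsq1 (sq_nonneg (α * R))
      _ = R ^ 2 * α ^ 2 := by ring
  have m2 : R ^ 2 * α ^ 2 ≤ R ^ 4 * α ^ 2 := by
    have h24 : R ^ 2 ≤ R ^ 4 := pow_le_pow_right₀ hR (by norm_num)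
    exact mul_le_mul_of_nonneg_right h24 (sq_nonneg α)
  have hFest : |Real.cosh s - 1 - α ^ 2 * r ^ 2 / 2| ≤ 24 * (R ^ 4 * α ^ 4) := by
    have h1 : Real.cosh s - 1 - α ^ 2 * r ^ 2 / 2 =
        (Real.cosh (a - b) - 1 - (a - b) ^ 2 / 2) +
          (Real.sinh a * Real.sinh b - a * b) * (1 - c) := by
      rw [hcs, hr2]; ring
    have e1 : (a - b) ^ 4 ≤ 16 * (R ^ 4 * α ^ 4) := by
      have h2 := pow_le_pow_left₀ (sq_nonneg (a - b)) hab_sq 2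
      calc (a - b) ^ 4 = ((a - b) ^ 2) ^ 2 := by ring
        _ ≤ (4 * (R ^ 2 * α ^ 2)) ^ 2 := h2
        _ = 16 * (R ^ 4 * α ^ 4) := by ring
    have hab_le : a * b ≤ R ^ 2 * α ^ 2 := by
      calc a * b ≤ (α * R) * (α * R) := mul_le_mul haR hbR hb0 (by positivity)
        _ = R ^ 2 * α ^ 2 := by ring
    have hab2sum : a ^ 2 + b ^ 2 ≤ 2 * (R ^ 2 * α ^ 2) := by
      have h3 := pow_le_pow_left₀ ha0 haR 2
      have h4 := pow_le_pow_left₀ hb0 hbR 2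
      have h5 : (α * R) ^ 2 = R ^ 2 * α ^ 2 := by ring
      rw [h5] at h3 h4
      linarith
    have hsp : Real.sinh a * Real.sinh b - a * b ≤ 4 * (R ^ 4 * α ^ 4) := by
      have h5 : 2 * (a * b) * (a ^ 2 + b ^ 2) ≤ 2 * (R ^ 2 * α ^ 2) * (2 * (R ^ 2 * α ^ 2)) := by
        apply mul_le_mul (by linarith [mul_le_mul_of_nonneg_left hab_le (by norm_num : (0:ℝ) ≤ 2)])
          hab2sum (by positivity) (by positivity)
      calc Real.sinh a * Real.sinh b - a * b ≤ 2 * (a * b) * (a ^ 2 + b ^ 2) := hprod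
        _ ≤ 2 * (R ^ 2 * α ^ 2) * (2 * (R ^ 2 * α ^ 2)) := h5
        _ = 4 * (R ^ 2 * α ^ 2) ^ 2 := by ring
        _ = 4 * (R ^ 4 * α ^ 4) := by ring
    have e2 : (Real.sinh a * Real.sinh b - a * b) * (1 - c) ≤ 8 * (R ^ 4 * α ^ 4) := by
      have h6 : (Real.sinh a * Real.sinh b - a * b) * (1 - c) ≤
          (Real.sinh a * Real.sinh b - a * b) * 2 :=
        mul_le_mul_of_nonneg_left (by linarith) (by linarith)
      linarith
    have e3 : 0 ≤ (Real.sinh a * Real.sinh b - a * b) * (1 - c) :=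
      mul_nonneg (by linarith) (by linarith)
    rw [h1]
    calc |(Real.cosh (a - b) - 1 - (a - b) ^ 2 / 2) +
          (Real.sinh a * Real.sinh b - a * b) * (1 - c)|
        ≤ |Real.cosh (a - b) - 1 - (a - b) ^ 2 / 2| +
          |(Real.sinh a * Real.sinh b - a * b) * (1 - c)| := abs_add_le _ _
      _ ≤ (a - b) ^ 4 + 8 * (R ^ 4 * α ^ 4) := by
          rw [abs_of_nonneg e3]; linarith
      _ ≤ 24 * (R ^ 4 * α ^ 4) := by linarith
  have hs0 : 0 ≤ s := hδ_nonneg α z w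
  have hsinh_half : Real.sinh (s / 2) ^ 2 = (Real.cosh s - 1) / 2 := by
    have h2 := Real.cosh_two_mul (s / 2)
    have h3 := Real.cosh_sq (s / 2)
    rw [show (2:ℝ) * (s / 2) = s by ring] at h2
    linarith
  have hFabs := abs_le.1 hFest
  have hsh0 : (0:ℝ) ≤ s / 2 := by linarith
  have hsl : s / 2 ≤ Real.sinh (s / 2) := self_le_sinh' hsh0
  have hsinh_sq_ub : Real.sinh (s / 2) ^ 2 ≤ 14 * (R ^ 4 * α ^ 2) := by
    rw [hsinh_half]
    linarith
  have hs_half_le : s / 2 ≤ 4 * R ^ 2 * α := by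
    have h1 : (s / 2) ^ 2 ≤ Real.sinh (s / 2) ^ 2 := pow_le_pow_left₀ hsh0 hsl 2
    have h2 : (s / 2) ^ 2 ≤ 16 * (R ^ 4 * α ^ 2) := by linarith
    have h4 : (s / 2) ^ 2 ≤ (4 * R ^ 2 * α) ^ 2 := by
      have h3 : (4 * R ^ 2 * α) ^ 2 = 16 * (R ^ 4 * α ^ 2) := by ring
      rw [h3]; exact h2
    exact le_of_pow_le_pow_left₀ (by norm_num) (by positivity) h4
  have hs_half1 : s / 2 ≤ 1 := by
    calc s / 2 ≤ 4 * R ^ 2 * α := hs_half_le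
      _ ≤ 4 * R ^ 2 * (1 / (4 * R ^ 2)) := by
          apply mul_le_mul_of_nonneg_left hα1 (by positivity)
      _ = 1 := by field_simp
  have hsρ : s ≤ ρ := by
    calc s ≤ 8 * R ^ 2 * α := by linarith
      _ ≤ 8 * R ^ 2 * (ρ / (8 * R ^ 2)) := by
          apply mul_le_mul_of_nonneg_left hαρ (by positivity)
      _ = ρ := by field_simp
  have hs2est : |s ^ 2 - α ^ 2 * r ^ 2| ≤ 3120 * (R ^ 8 * α ^ 4) := by
    have hsu : Real.sinh (s / 2) ≤ s / 2 + (s / 2) ^ 3 := sinh_le_add_cube hsh0 hs_half1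
    have hsq : Real.sinh (s / 2) ^ 2 ≤ (s / 2 + (s / 2) ^ 3) ^ 2 :=
      pow_le_pow_left₀ (hsh0.trans hsl) hsu 2
    have hsq2 : (s / 2) ^ 2 ≤ Real.sinh (s / 2) ^ 2 := pow_le_pow_left₀ hsh0 hsl 2
    have x6 : (s / 2) ^ 6 ≤ (s / 2) ^ 4 :=
      pow_le_pow_of_le_one hsh0 hs_half1 (by norm_num)
    have e1 : 2 * (Real.cosh s - 1) = 4 * Real.sinh (s / 2) ^ 2 := by
      rw [hsinh_half]; ring
    have hd0 : 0 ≤ 4 * Real.sinh (s / 2) ^ 2 - s ^ 2 := by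
      have : (s / 2) ^ 2 = s ^ 2 / 4 := by ring
      linarith
    have hd1 : 4 * Real.sinh (s / 2) ^ 2 - s ^ 2 ≤ 12 * (s / 2) ^ 4 := by
      have hexp : (s / 2 + (s / 2) ^ 3) ^ 2 =
          (s / 2) ^ 2 + 2 * (s / 2) ^ 4 + (s / 2) ^ 6 := by ring
      rw [hexp] at hsq
      have : (s / 2) ^ 2 = s ^ 2 / 4 := by ring
      linarith
    have hd2 : (s / 2) ^ 4 ≤ (4 * R ^ 2 * α) ^ 4 := pow_le_pow_left₀ hsh0 hs_half_le 4
    have h1 : |s ^ 2 - 2 * (Real.cosh s - 1)| ≤ 3072 * (R ^ 8 * α ^ 4) := by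
      rw [e1, abs_sub_comm, abs_of_nonneg hd0]
      calc 4 * Real.sinh (s / 2) ^ 2 - s ^ 2 ≤ 12 * (s / 2) ^ 4 := hd1
        _ ≤ 12 * (4 * R ^ 2 * α) ^ 4 := by linarith
        _ = 3072 * (R ^ 8 * α ^ 4) := by ring
    have h2 : |2 * (Real.cosh s - 1) - α ^ 2 * r ^ 2| ≤ 48 * (R ^ 4 * α ^ 4) := by
      rw [show 2 * (Real.cosh s - 1) - α ^ 2 * r ^ 2
          = 2 * (Real.cosh s - 1 - α ^ 2 * r ^ 2 / 2) by ring, abs_mul]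
      rw [abs_of_nonneg (by norm_num : (0:ℝ) ≤ 2)]
      linarith
    have m3 : R ^ 4 * α ^ 4 ≤ R ^ 8 * α ^ 4 := by
      have h4 : R ^ 4 ≤ R ^ 8 := pow_le_pow_right₀ hR (by norm_num)
      have := mul_le_mul_of_nonneg_right h4 (pow_nonneg hα.le 4)
      linarith
    calc |s ^ 2 - α ^ 2 * r ^ 2|
        = |(s ^ 2 - 2 * (Real.cosh s - 1)) + (2 * (Real.cosh s - 1) - α ^ 2 * r ^ 2)| := by
          ring_nf
      _ ≤ |s ^ 2 - 2 * (Real.cosh s - 1)| + |2 * (Real.cosh s - 1) - α ^ 2 * r ^ 2| :=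
          abs_add_le _ _
      _ ≤ 3072 * (R ^ 8 * α ^ 4) + 48 * (R ^ 4 * α ^ 4) := by linarith
      _ ≤ 3120 * (R ^ 8 * α ^ 4) := by linarith
  have hs_sq_le : s ^ 2 ≤ 64 * (R ^ 4 * α ^ 2) := by
    have h1 : s ≤ 8 * R ^ 2 * α := by linarith
    have h2 := pow_le_pow_left₀ hs0 h1 2
    calc s ^ 2 ≤ (8 * R ^ 2 * α) ^ 2 := h2
      _ = 64 * (R ^ 4 * α ^ 2) := by ring
  have hT := hTay s hs0 hsρ
  have hαne : α ≠ 0 := ne_of_gt hα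
  have hRne : R ≠ 0 := ne_of_gt hR0
  have hα2 : (0:ℝ) < α ^ 2 := by positivity
  have hdecomp : 1 / (2 * α ^ 2) * (Q s - Q 0) - q / 4 * r ^ 2 =
      1 / (2 * α ^ 2) * (Q s - Q 0 - q / 2 * s ^ 2) +
        q / (4 * α ^ 2) * (s ^ 2 - α ^ 2 * r ^ 2) := by
    field_simp; ring
  rw [hdecomp]
  have t1 : |1 / (2 * α ^ 2) * (Q s - Q 0 - q / 2 * s ^ 2)| ≤ ε / 8 := by
    rw [abs_mul, abs_of_pos (by positivity : (0:ℝ) < 1 / (2 * α ^ 2))]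
    calc 1 / (2 * α ^ 2) * |Q s - Q 0 - q / 2 * s ^ 2|
        ≤ 1 / (2 * α ^ 2) * (ε / (256 * R ^ 4) * (64 * (R ^ 4 * α ^ 2))) := by
          apply mul_le_mul_of_nonneg_left _ (by positivity)
          calc |Q s - Q 0 - q / 2 * s ^ 2| ≤ ε / (256 * R ^ 4) * s ^ 2 := hT
            _ ≤ ε / (256 * R ^ 4) * (64 * (R ^ 4 * α ^ 2)) :=
              mul_le_mul_of_nonneg_left hs_sq_le (by positivity)
      _ = ε / 8 := by field_simp; ring
  have t2 : |q / (4 * α ^ 2) * (s ^ 2 - α ^ 2 * r ^ 2)| ≤ ε / 4 := by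
    rw [abs_mul, abs_div, abs_of_pos (show (0:ℝ) < 4 * α ^ 2 by positivity)]
    calc |q| / (4 * α ^ 2) * |s ^ 2 - α ^ 2 * r ^ 2|
        ≤ |q| / (4 * α ^ 2) * (3120 * (R ^ 8 * α ^ 4)) :=
          mul_le_mul_of_nonneg_left hs2est (by positivity)
      _ = |q| * (3120 * R ^ 8) * α ^ 2 / 4 := by field_simp
      _ ≤ ε / 4 := by
          have h1 : |q| * (3120 * R ^ 8) ≤ C := by rw [hC]; linarith
          have h2 : |q| * (3120 * R ^ 8) * α ^ 2 ≤ C * (ε / C) :=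
            mul_le_mul h1 hαε (by positivity) hCpos.le
          rw [mul_div_cancel₀ _ (ne_of_gt hCpos)] at h2
          linarith
  calc |1 / (2 * α ^ 2) * (Q s - Q 0 - q / 2 * s ^ 2) +
        q / (4 * α ^ 2) * (s ^ 2 - α ^ 2 * r ^ 2)|
      ≤ |1 / (2 * α ^ 2) * (Q s - Q 0 - q / 2 * s ^ 2)| +
        |q / (4 * α ^ 2) * (s ^ 2 - α ^ 2 * r ^ 2)| := abs_add_le _ _
    _ ≤ ε / 8 + ε / 4 := by linarith
    _ ≤ ε := by linarith

end Helpers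

/-- Uniform convergence of the rescaled functionals `J_t` to the
Euclidean limiting functional `J`.  The rescaled hyperbolic distance `δ α z w` is
characterised as the unique nonnegative number `D` with
`cosh D = cosh(α|z|)·cosh(α|w|) − sinh(α|z|)·sinh(α|w|)·cos γ(z,w)`. -/
theorem stmt_0 (d : ℕ) (hd : 1 ≤ d)
    (K : Set (EuclideanSpace ℝ (Fin d))) (hK : IsCompact K)
    (Q : ℝ → ℝ) (hQ : ContDiff ℝ 2 Q) (hQ'0 : deriv Q 0 = 0)
    (δ : ℝ → EuclideanSpace ℝ (Fin d) → EuclideanSpace ℝ (Fin d) → ℝ)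
    (hδ_nonneg : ∀ α z w, 0 ≤ δ α z w)
    (hδ_cosh : ∀ α z w, Real.cosh (δ α z w) =
      Real.cosh (α * ‖z‖) * Real.cosh (α * ‖w‖) -
        Real.sinh (α * ‖z‖) * Real.sinh (α * ‖w‖) *
          ((inner ℝ z w : ℝ) / (‖z‖ * ‖w‖))) :
    ∀ ε > 0, ∃ T > 0, ∀ t ≥ T,
      ∀ μ : Measure (EuclideanSpace ℝ (Fin d)), IsProbabilityMeasure μ → μ K = 1 →
        |(-(t ^ 2 / (2 * t ^ ((3 : ℝ) / 2))) *
            ∫ z, (∫ w, (Q (δ (t ^ (-(1 : ℝ) / 4)) z w) - Q 0) ∂μ) ∂μ) -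
          (-(iteratedDeriv 2 Q 0 / 4) *
            ∫ z, (∫ w, ‖z - w‖ ^ 2 ∂μ) ∂μ)| ≤ ε := by
  intro ε hε
  obtain ⟨R₀, hR₀⟩ := hK.isBounded.subset_closedBall 0
  set R := max R₀ 1 with hR_def
  have hR : 1 ≤ R := le_max_right _ _
  have hR0 : (0:ℝ) < R := lt_of_lt_of_le one_pos hR
  have hKR : ∀ z ∈ K, ‖z‖ ≤ R := by
    intro z hz
    have h := hR₀ hz
    rw [Metric.mem_closedBall, dist_zero_right] at h
    exact h.trans (le_max_left _ _)
  have hR2one : (1:ℝ) ≤ R ^ 2 := by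
    calc (1:ℝ) = 1 * 1 := by ring
      _ ≤ R * R := mul_le_mul hR hR zero_le_one hR0.le
      _ = R ^ 2 := by ring
  obtain ⟨α₀, hα₀pos, hα₀le, hkey⟩ :=
    key_pointwise K Q hQ hQ'0 δ hδ_nonneg hδ_cosh R hR hKR (ε / 2) (by positivity)
  have hα₀1 : α₀ ≤ 1 := by
    have h1 : 1 / (4 * R ^ 2) ≤ 1 := by
      rw [div_le_one (by positivity)]; linarith
    linarith
  refine ⟨max 1 (1 / α₀ ^ 4), lt_of_lt_of_le one_pos (le_max_left _ _), ?_⟩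
  intro t ht μ hμ hμK
  haveI := hμ
  have ht1 : (1:ℝ) ≤ t := le_trans (le_max_left _ _) ht
  have ht0 : (0:ℝ) < t := lt_of_lt_of_le one_pos ht1
  set α := t ^ (-(1 : ℝ) / 4) with hα_def
  have hαpos : 0 < α := Real.rpow_pos_of_pos ht0 _
  have hα4 : α ^ 4 = t⁻¹ := by
    rw [hα_def, ← Real.rpow_natCast (t ^ (-(1 : ℝ) / 4)) 4, ← Real.rpow_mul ht0.le]
    norm_num [Real.rpow_neg_one]
  have hαα₀ : α ≤ α₀ := by
    have h1 : 1 / α₀ ^ 4 ≤ t := le_trans (le_max_right _ _) ht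
    have h2 : α ^ 4 ≤ α₀ ^ 4 := by
      rw [hα4]
      rw [inv_le_comm₀ ht0 (pow_pos hα₀pos 4)]
      rwa [one_div] at h1
    exact le_of_pow_le_pow_left₀ (by norm_num) hα₀pos.le h2
  have hαR : α ≤ 1 / (4 * R ^ 2) := hαα₀.trans hα₀le
  have hα1 : α ≤ 1 := hαα₀.trans hα₀1
  have hα2 : α ^ 2 = t ^ (-(1:ℝ)/2) := by
    rw [hα_def, ← Real.rpow_natCast (t ^ (-(1 : ℝ) / 4)) 2, ← Real.rpow_mul ht0.le]
    norm_num
  have hA : t ^ 2 / (2 * t ^ ((3:ℝ)/2)) = 1 / (2 * α ^ 2) := by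
    rw [hα2, div_eq_div_iff (by positivity) (by positivity)]
    have h2 : (t:ℝ) ^ 2 = t ^ ((2:ℝ)) := by
      rw [← Real.rpow_natCast t 2]; norm_num
    have hmul : t ^ ((2:ℝ)) * t ^ (-(1:ℝ)/2) = t ^ ((3:ℝ)/2) := by
      rw [← Real.rpow_add ht0]; norm_num
    rw [h2]
    linear_combination 2 * hmul
  set q := iteratedDeriv 2 Q 0 with hq_def
  have hq_eq : q = deriv (deriv Q) 0 := by
    rw [hq_def, show (2:ℕ) = 1 + 1 from rfl, iteratedDeriv_succ, iteratedDeriv_one]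
  -- a.e. membership in K
  have hKmeas : MeasurableSet K := hK.isClosed.measurableSet
  have hae : ∀ᵐ x ∂μ, x ∈ K := by
    rw [ae_iff]
    have : {x | ¬x ∈ K} = Kᶜ := rfl
    rw [this, measure_compl hKmeas (measure_ne_top μ K), hμK, measure_univ]
    simp
  -- measurability of the δ-integrand
  have hδ_eq : ∀ z w : EuclideanSpace ℝ (Fin d), δ α z w =
      Real.arsinh (Real.sqrt ((Real.cosh (α * ‖z‖) * Real.cosh (α * ‖w‖) -
        Real.sinh (α * ‖z‖) * Real.sinh (α * ‖w‖) *
          ((inner ℝ z w : ℝ) / (‖z‖ * ‖w‖))) ^ 2 - 1)) := by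
    intro z w
    rw [← hδ_cosh α z w,
      show Real.cosh (δ α z w) ^ 2 - 1 = Real.sinh (δ α z w) ^ 2 by
        rw [Real.cosh_sq]; ring,
      Real.sqrt_sq (Real.sinh_nonneg_iff.2 (hδ_nonneg α z w)), Real.arsinh_sinh]
  have hFmeas : Measurable (fun p : EuclideanSpace ℝ (Fin d) × EuclideanSpace ℝ (Fin d) =>
      Real.cosh (α * ‖p.1‖) * Real.cosh (α * ‖p.2‖) -
        Real.sinh (α * ‖p.1‖) * Real.sinh (α * ‖p.2‖) *
          ((inner ℝ p.1 p.2 : ℝ) / (‖p.1‖ * ‖p.2‖))) := by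
    have hinner : Measurable (fun p : EuclideanSpace ℝ (Fin d) × EuclideanSpace ℝ (Fin d) =>
        (inner ℝ p.1 p.2 : ℝ)) := continuous_inner.measurable
    have hn1 : Measurable (fun p : EuclideanSpace ℝ (Fin d) × EuclideanSpace ℝ (Fin d) =>
        ‖p.1‖) := measurable_fst.norm
    have hn2 : Measurable (fun p : EuclideanSpace ℝ (Fin d) × EuclideanSpace ℝ (Fin d) =>
        ‖p.2‖) := measurable_snd.norm
    exact ((Real.continuous_cosh.measurable.comp (hn1.const_mul α)).mul
      (Real.continuous_cosh.measurable.comp (hn2.const_mul α))).sub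
      (((Real.continuous_sinh.measurable.comp (hn1.const_mul α)).mul
        (Real.continuous_sinh.measurable.comp (hn2.const_mul α))).mul
        (hinner.div (hn1.mul hn2)))
  have hδmeas : Measurable (fun p : EuclideanSpace ℝ (Fin d) × EuclideanSpace ℝ (Fin d) =>
      δ α p.1 p.2) := by
    have : (fun p : EuclideanSpace ℝ (Fin d) × EuclideanSpace ℝ (Fin d) => δ α p.1 p.2) =
        (fun p => Real.arsinh (Real.sqrt ((Real.cosh (α * ‖p.1‖) * Real.cosh (α * ‖p.2‖) -
          Real.sinh (α * ‖p.1‖) * Real.sinh (α * ‖p.2‖) *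
            ((inner ℝ p.1 p.2 : ℝ) / (‖p.1‖ * ‖p.2‖))) ^ 2 - 1))) := by
      funext p; exact hδ_eq p.1 p.2
    rw [this]
    exact Real.continuous_arsinh.measurable.comp
      (Real.continuous_sqrt.measurable.comp (((hFmeas.pow_const 2).sub measurable_const)))
  have hf₁meas : Measurable (fun p : EuclideanSpace ℝ (Fin d) × EuclideanSpace ℝ (Fin d) =>
      Q (δ α p.1 p.2) - Q 0) :=
    (hQ.continuous.measurable.comp hδmeas).sub measurable_const
  have hf₂cont : Continuous (fun p : EuclideanSpace ℝ (Fin d) × EuclideanSpace ℝ (Fin d) =>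
      ‖p.1 - p.2‖ ^ 2) := by fun_prop
  -- bound on δ over K × K
  have hsle : ∀ z ∈ K, ∀ w ∈ K, δ α z w ≤ 2 * R := by
    intro z hz w hw
    have hc := abs_le.1 (cosc_abs_le z w)
    have hsz : 0 ≤ Real.sinh (α * ‖z‖) := Real.sinh_nonneg_iff.2 (by positivity)
    have hsw : 0 ≤ Real.sinh (α * ‖w‖) := Real.sinh_nonneg_iff.2 (by positivity)
    have hS : 0 ≤ Real.sinh (α * ‖z‖) * Real.sinh (α * ‖w‖) := mul_nonneg hsz hsw
    have h1 : Real.cosh (δ α z w) ≤ Real.cosh (α * ‖z‖ + α * ‖w‖) := by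
      rw [hδ_cosh, Real.cosh_add]
      have h2 := mul_le_mul_of_nonneg_left hc.1 hS
      linarith [h2]
    have h2 := Real.cosh_le_cosh.1 h1
    have hz' := hKR z hz
    have hw' := hKR w hw
    have h3 : 0 ≤ α * ‖z‖ + α * ‖w‖ := by positivity
    rw [abs_of_nonneg (hδ_nonneg α z w), abs_of_nonneg h3] at h2
    have h4 : α * ‖z‖ ≤ R := by
      calc α * ‖z‖ ≤ 1 * R := mul_le_mul hα1 hz' (norm_nonneg z) zero_le_one
        _ = R := one_mul R
    have h5 : α * ‖w‖ ≤ R := by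
      calc α * ‖w‖ ≤ 1 * R := mul_le_mul hα1 hw' (norm_nonneg w) zero_le_one
        _ = R := one_mul R
    linarith
  -- uniform bounds for integrands on K
  obtain ⟨M, hM⟩ := (isCompact_Icc (a := (0:ℝ)) (b := 2 * R)).exists_bound_of_continuousOn
    hQ.continuous.continuousOn
  have hf₁bdd : ∀ z ∈ K, ∀ w ∈ K, |Q (δ α z w) - Q 0| ≤ M + |Q 0| := by
    intro z hz w hw
    have h := hM (δ α z w) ⟨hδ_nonneg α z w, hsle z hz w hw⟩
    rw [Real.norm_eq_abs] at h
    calc |Q (δ α z w) - Q 0| ≤ |Q (δ α z w)| + |Q 0| := abs_sub _ _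
      _ ≤ M + |Q 0| := by linarith
  have hf₂bdd : ∀ z ∈ K, ∀ w ∈ K, |‖z - w‖ ^ 2| ≤ 4 * R ^ 2 := by
    intro z hz w hw
    rw [abs_of_nonneg (sq_nonneg _)]
    have h1 : ‖z - w‖ ≤ 2 * R := by
      calc ‖z - w‖ ≤ ‖z‖ + ‖w‖ := norm_sub_le z w
        _ ≤ 2 * R := by linarith [hKR z hz, hKR w hw]
    calc ‖z - w‖ ^ 2 ≤ (2 * R) ^ 2 := pow_le_pow_left₀ (norm_nonneg _) h1 2
      _ = 4 * R ^ 2 := by ring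
  set M₁ := M + |Q 0| with hM₁_def
  -- per-z integrability (a.e. z)
  have hint₁ : ∀ z ∈ K, Integrable (fun w => Q (δ α z w) - Q 0) μ := by
    intro z hz
    refine Integrable.mono' (integrable_const M₁) ?_ ?_
    · exact (hf₁meas.comp measurable_prodMk_left).aestronglyMeasurable
    · filter_upwards [hae] with w hw
      rw [Real.norm_eq_abs]
      exact hf₁bdd z hz w hw
  have hint₂ : ∀ z ∈ K, Integrable (fun w => ‖z - w‖ ^ 2) μ := by
    intro z hz
    refine Integrable.mono' (integrable_const (4 * R ^ 2)) ?_ ?_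
    · exact (Continuous.aestronglyMeasurable (by fun_prop))
    · filter_upwards [hae] with w hw
      rw [Real.norm_eq_abs]
      exact hf₂bdd z hz w hw
  -- integrability of z ↦ inner integrals
  have prob_bound : ∀ (f : EuclideanSpace ℝ (Fin d) → ℝ) (C : ℝ),
      (∀ᵐ x ∂μ, ‖f x‖ ≤ C) → ‖∫ x, f x ∂μ‖ ≤ C := by
    intro f C h
    have h2 := norm_integral_le_of_norm_le_const (μ := μ) h
    simpa [measure_univ] using h2
  have hF₁m : StronglyMeasurable (fun z => ∫ w, (Q (δ α z w) - Q 0) ∂μ) :=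
    hf₁meas.stronglyMeasurable.integral_prod_right'
  have hF₂m : StronglyMeasurable (fun z => ∫ w, ‖z - w‖ ^ 2 ∂μ) :=
    hf₂cont.stronglyMeasurable.integral_prod_right'
  have hF₁int : Integrable (fun z => ∫ w, (Q (δ α z w) - Q 0) ∂μ) μ := by
    refine Integrable.mono' (integrable_const M₁) hF₁m.aestronglyMeasurable ?_
    filter_upwards [hae] with z hz
    refine prob_bound _ _ ?_
    filter_upwards [hae] with w hw
    rw [Real.norm_eq_abs]
    exact hf₁bdd z hz w hw
  have hF₂int : Integrable (fun z => ∫ w, ‖z - w‖ ^ 2 ∂μ) μ := by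
    refine Integrable.mono' (integrable_const (4 * R ^ 2)) hF₂m.aestronglyMeasurable ?_
    filter_upwards [hae] with z hz
    refine prob_bound _ _ ?_
    filter_upwards [hae] with w hw
    rw [Real.norm_eq_abs]
    exact hf₂bdd z hz w hw
  -- rewrite the goal
  rw [hA]
  set B := 1 / (2 * α ^ 2) with hB_def
  have hsplit : (-B * ∫ z, (∫ w, (Q (δ α z w) - Q 0) ∂μ) ∂μ) -
      (-(q / 4) * ∫ z, (∫ w, ‖z - w‖ ^ 2 ∂μ) ∂μ) =
      ∫ z, (-B * (∫ w, (Q (δ α z w) - Q 0) ∂μ) + (q / 4) * (∫ w, ‖z - w‖ ^ 2 ∂μ)) ∂μ := by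
    rw [integral_add ((hF₁int.const_mul (-B))) ((hF₂int.const_mul (q / 4))),
      integral_const_mul, integral_const_mul]
    ring
  rw [hsplit]
  have hinner_eq : ∀ᵐ z ∂μ,
      -B * (∫ w, (Q (δ α z w) - Q 0) ∂μ) + (q / 4) * (∫ w, ‖z - w‖ ^ 2 ∂μ) =
      ∫ w, (-B * (Q (δ α z w) - Q 0) + (q / 4) * ‖z - w‖ ^ 2) ∂μ := by
    filter_upwards [hae] with z hz
    rw [integral_add (((hint₁ z hz).const_mul (-B))) (((hint₂ z hz).const_mul (q / 4))),
      integral_const_mul, integral_const_mul]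
  rw [integral_congr_ae hinner_eq]
  -- pointwise bound and conclusion
  have hpt : ∀ z ∈ K, ∀ w ∈ K,
      |(-B * (Q (δ α z w) - Q 0) + (q / 4) * ‖z - w‖ ^ 2)| ≤ ε / 2 := by
    intro z hz w hw
    have h := hkey α hαpos hαα₀ z hz w hw
    rw [hq_eq, hB_def]
    rw [show -(1 / (2 * α ^ 2)) * (Q (δ α z w) - Q 0) +
        (deriv (deriv Q) 0 / 4) * ‖z - w‖ ^ 2 =
        -((1 / (2 * α ^ 2)) * (Q (δ α z w) - Q 0) -
          deriv (deriv Q) 0 / 4 * ‖z - w‖ ^ 2) by ring, abs_neg]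
    exact h
  have hfinal : ‖∫ z, (∫ w, (-B * (Q (δ α z w) - Q 0) + (q / 4) * ‖z - w‖ ^ 2) ∂μ) ∂μ‖ ≤ ε / 2 := by
    refine prob_bound _ _ ?_
    filter_upwards [hae] with z hz
    refine prob_bound _ _ ?_
    filter_upwards [hae] with w hw
    rw [Real.norm_eq_abs]
    exact hpt z hz w hw
  rw [Real.norm_eq_abs] at hfinal
  linarith
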